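/- Instantaneous regret bound for the optimistic arm: Let V ∈ ℝ^{p×p} be symmetric positive definite, θ̂ ∈ ℝ^p, β ≥ 0, and let c = {θ ∈ ℝ^p : (θ − θ̂)ᵀV(θ − θ̂) ≤ β}. Let A ⊆ ℝ^p be a set of arms, let θ* ∈ c, and suppose a_t ∈ A satisfies sup_{θ ∈ c} ⟨θ, a_t⟩ ≥ sup_{θ ∈ c} ⟨θ, a⟩ for every a ∈ A (the optimistic choice). Then for every a* ∈ A, ⟨θ*, a*⟩ − ⟨θ*, a_t⟩ ≤ 2√β·√(a_tᵀV⁻¹a_t). -/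

import Mathlib

open Matrix

lemma sym_dot {p : ℕ} {V : Matrix (Fin p) (Fin p) ℝ} (hV : V.IsHermitian)
    (x y : Fin p → ℝ) : x ⬝ᵥ (V *ᵥ y) = y ⬝ᵥ (V *ᵥ x) := by
  rw [dotProduct_mulVec, ← mulVec_transpose, dotProduct_comm]
  congr 1
  rw [show Vᵀ = V from hV]

lemma gen_cauchy {p : ℕ} {V : Matrix (Fin p) (Fin p) ℝ} (hV : V.PosDef)
    (x a : Fin p → ℝ) :
    |x ⬝ᵥ a| ≤ Real.sqrt (x ⬝ᵥ (V *ᵥ x)) * Real.sqrt (a ⬝ᵥ (V⁻¹ *ᵥ a)) := by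
  have hinv : V.PosDef := hV
  set y := V⁻¹ *ᵥ a with hy
  have hVy : V *ᵥ y = a := by
    rw [hy, mulVec_mulVec, mul_nonsing_inv _ (isUnit_iff_isUnit_det _ |>.1 hV.isUnit),
      one_mulVec]
  have hyVy : y ⬝ᵥ (V *ᵥ y) = a ⬝ᵥ (V⁻¹ *ᵥ a) := by
    rw [hVy, dotProduct_comm]
  -- quadratic nonneg
  have hq : ∀ t : ℝ, 0 ≤ (y ⬝ᵥ (V *ᵥ y)) * (t * t) + (2 * (x ⬝ᵥ a)) * t + x ⬝ᵥ (V *ᵥ x) := by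
    intro t
    have h := hV.posSemidef.dotProduct_mulVec_nonneg (x + t • y)
    have hxy : x ⬝ᵥ (V *ᵥ y) = x ⬝ᵥ a := by rw [hVy]
    have hyx : y ⬝ᵥ (V *ᵥ x) = x ⬝ᵥ a := by rw [sym_dot hV.isHermitian, hVy]
    simp only [RCLike.re_to_real, star_trivial] at h
    calc (0:ℝ) ≤ (x + t • y) ⬝ᵥ (V *ᵥ (x + t • y)) := h
      _ = (y ⬝ᵥ (V *ᵥ y)) * (t * t) + (2 * (x ⬝ᵥ a)) * t + x ⬝ᵥ (V *ᵥ x) := by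
          rw [mulVec_add, mulVec_smul, dotProduct_add, add_dotProduct, add_dotProduct,
            dotProduct_smul, smul_dotProduct, smul_dotProduct, dotProduct_smul,
            hxy, hyx]
          simp only [smul_eq_mul]
          ring
  have hd := discrim_le_zero hq
  rw [discrim] at hd
  have hsq : (x ⬝ᵥ a) ^ 2 ≤ (x ⬝ᵥ (V *ᵥ x)) * (y ⬝ᵥ (V *ᵥ y)) := by nlinarith
  have h1 : (0:ℝ) ≤ x ⬝ᵥ (V *ᵥ x) := by simpa only [star_trivial] using hV.posSemidef.dotProduct_mulVec_nonneg x
  have h2 : (0:ℝ) ≤ y ⬝ᵥ (V *ᵥ y) := by simpa only [star_trivial] using hV.posSemidef.dotProduct_mulVec_nonneg y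
  calc |x ⬝ᵥ a| = Real.sqrt ((x ⬝ᵥ a) ^ 2) := (Real.sqrt_sq_eq_abs _).symm
    _ ≤ Real.sqrt ((x ⬝ᵥ (V *ᵥ x)) * (y ⬝ᵥ (V *ᵥ y))) := Real.sqrt_le_sqrt hsq
    _ = Real.sqrt (x ⬝ᵥ (V *ᵥ x)) * Real.sqrt (a ⬝ᵥ (V⁻¹ *ᵥ a)) := by
        rw [Real.sqrt_mul h1, hyVy]

/-- Instantaneous regret bound for the optimistic arm. -/
theorem optimistic_regret_bound
    {p : ℕ}
    (V : Matrix (Fin p) (Fin p) ℝ) (hV : V.PosDef)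
    (θhat : Fin p → ℝ) (β : ℝ) (hβ : 0 ≤ β)
    (c : Set (Fin p → ℝ))
    (hc : c = {θ : Fin p → ℝ | (θ - θhat) ⬝ᵥ (V *ᵥ (θ - θhat)) ≤ β})
    (A : Set (Fin p → ℝ))
    (θstar : Fin p → ℝ) (hθstar : θstar ∈ c)
    (a_t : Fin p → ℝ) (ha_t : a_t ∈ A)
    (hopt : ∀ a ∈ A, sSup ((fun θ : Fin p → ℝ => θ ⬝ᵥ a) '' c) ≤
      sSup ((fun θ : Fin p → ℝ => θ ⬝ᵥ a_t) '' c)) :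
    ∀ astar ∈ A, θstar ⬝ᵥ astar - θstar ⬝ᵥ a_t ≤
      2 * Real.sqrt β * Real.sqrt (a_t ⬝ᵥ (V⁻¹ *ᵥ a_t)) := by
  intro astar hastar
  set w := Real.sqrt (a_t ⬝ᵥ (V⁻¹ *ᵥ a_t)) with hw
  -- key bound for any θ ∈ c, any a
  have key : ∀ θ ∈ c, ∀ a : Fin p → ℝ,
      |θ ⬝ᵥ a - θhat ⬝ᵥ a| ≤ Real.sqrt β * Real.sqrt (a ⬝ᵥ (V⁻¹ *ᵥ a)) := by
    intro θ hθ a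
    rw [hc] at hθ
    have h1 := gen_cauchy hV (θ - θhat) a
    have h2 : Real.sqrt ((θ - θhat) ⬝ᵥ (V *ᵥ (θ - θhat))) ≤ Real.sqrt β :=
      Real.sqrt_le_sqrt hθ
    have h3 : (θ - θhat) ⬝ᵥ a = θ ⬝ᵥ a - θhat ⬝ᵥ a := by
      rw [sub_dotProduct]
    rw [h3] at h1
    have h4 : (0:ℝ) ≤ Real.sqrt (a ⬝ᵥ (V⁻¹ *ᵥ a)) := Real.sqrt_nonneg _
    calc |θ ⬝ᵥ a - θhat ⬝ᵥ a| ≤ _ := h1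
      _ ≤ Real.sqrt β * Real.sqrt (a ⬝ᵥ (V⁻¹ *ᵥ a)) := by
        exact mul_le_mul_of_nonneg_right h2 h4
  have hθhat : θhat ∈ c := by
    rw [hc]; simp [hβ]
  -- bounded above
  have bdd : ∀ a : Fin p → ℝ, ∀ z ∈ ((fun θ : Fin p → ℝ => θ ⬝ᵥ a) '' c),
      z ≤ θhat ⬝ᵥ a + Real.sqrt β * Real.sqrt (a ⬝ᵥ (V⁻¹ *ᵥ a)) := by
    rintro a z ⟨θ, hθ, rfl⟩
    have := key θ hθ a
    have := abs_le.1 this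
    linarith [this.2]
  have hne : ∀ a : Fin p → ℝ, ((fun θ : Fin p → ℝ => θ ⬝ᵥ a) '' c).Nonempty :=
    fun a => ⟨θhat ⬝ᵥ a, θhat, hθhat, rfl⟩
  -- θstar ⬝ astar ≤ sSup (image ... astar)
  have h5 : θstar ⬝ᵥ astar ≤ sSup ((fun θ : Fin p → ℝ => θ ⬝ᵥ astar) '' c) :=
    le_csSup ⟨_, fun z hz => bdd astar z hz⟩ ⟨θstar, hθstar, rfl⟩
  have h6 := hopt astar hastar
  have h7 : sSup ((fun θ : Fin p → ℝ => θ ⬝ᵥ a_t) '' c) ≤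
      θhat ⬝ᵥ a_t + Real.sqrt β * w :=
    csSup_le (hne a_t) (bdd a_t)
  have h8 : θhat ⬝ᵥ a_t - Real.sqrt β * w ≤ θstar ⬝ᵥ a_t := by
    have := abs_le.1 (key θstar hθstar a_t)
    linarith [this.1]
  linarith
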